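/- Let R, b be smooth functions on [L,∞) with R > 0, let c ∈ ℝ, and define K_R(ℓ) = R(ℓ)⁻³ · ( c + ∫_L^ℓ R'(s) R(s)² b(s) ds ), K_ℓ = b − 2K_R, and H = 2R'/R. Then 2H(K_ℓ − K_R) − 4∂_ℓK_R ≡ 0 on [L,∞). (In particular, for the data given by this ansatz, the right-hand side of the spherically symmetric dominant energy condition inequality vanishes identically.) -/

import Mathlib

open Filter Asymptotics Set Topology

/-- Mean curvature `H = 2 R' / R` of the spherically symmetric spheres. -/
noncomputable def Hf (R : ℝ → ℝ) : ℝ → ℝ := fun ℓ => 2 * deriv R ℓ / R ℓ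

/-- For the integral ansatz `K_R(ℓ) = R(ℓ)⁻³ (c + ∫_L^ℓ R' R² b)`, `K_ℓ = b − 2K_R`,
the momentum-density combination `2H(K_ℓ − K_R) − 4∂_ℓK_R` vanishes identically on
`[L,∞)`. -/
theorem momentum_density_vanishes_for_ansatz (L c : ℝ) (R b : ℝ → ℝ)
    (hR : ContDiff ℝ (⊤ : ℕ∞) R)
    (hb : ContDiff ℝ (⊤ : ℕ∞) b)
    (hRpos : ∀ ℓ ∈ Set.Ici L, 0 < R ℓ)
    (KR Kl : ℝ → ℝ)
    (hKRdef : KR = fun ℓ =>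
      (R ℓ ^ 3)⁻¹ * (c + ∫ s in L..ℓ, deriv R s * R s ^ 2 * b s))
    (hKldef : Kl = fun ℓ => b ℓ - 2 * KR ℓ) :
    ∀ ℓ ∈ Set.Ici L, 2 * Hf R ℓ * (Kl ℓ - KR ℓ) - 4 * deriv KR ℓ = 0 := by
  intro ℓ hℓ
  have hRne : R ℓ ≠ 0 := (hRpos ℓ hℓ).ne'
  set f : ℝ → ℝ := fun s => deriv R s * R s ^ 2 * b s with hf
  have hfc : Continuous f := by
    exact ((hR.continuous_deriv (by norm_num)).mul ((hR.continuous).pow 2)).mul hb.continuous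
  have hFder : HasDerivAt (fun x => ∫ s in L..x, f s) (f ℓ) ℓ :=
    intervalIntegral.integral_hasDerivAt_right (hfc.intervalIntegrable _ _)
      (hfc.stronglyMeasurableAtFilter _ _) hfc.continuousAt
  have hRdiff : HasDerivAt R (deriv R ℓ) ℓ :=
    (hR.differentiable (by norm_num) ℓ).hasDerivAt
  have hR3 : HasDerivAt (fun x => R x ^ 3) (3 * R ℓ ^ 2 * deriv R ℓ) ℓ := by
    simpa using hRdiff.fun_pow 3
  have hR3ne : R ℓ ^ 3 ≠ 0 := pow_ne_zero _ hRne
  have hinv : HasDerivAt (fun x => (R x ^ 3)⁻¹)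
      (-(3 * R ℓ ^ 2 * deriv R ℓ) / (R ℓ ^ 3) ^ 2) ℓ := hR3.inv hR3ne
  have hKR : HasDerivAt KR
      ((-(3 * R ℓ ^ 2 * deriv R ℓ) / (R ℓ ^ 3) ^ 2) *
        (c + ∫ s in L..ℓ, f s) + (R ℓ ^ 3)⁻¹ * f ℓ) ℓ := by
    rw [hKRdef]
    simpa using hinv.fun_mul ((hasDerivAt_const ℓ c).fun_add hFder)
  have hderiv : deriv KR ℓ = (-(3 * R ℓ ^ 2 * deriv R ℓ) / (R ℓ ^ 3) ^ 2) *
        (c + ∫ s in L..ℓ, f s) + (R ℓ ^ 3)⁻¹ * f ℓ := hKR.deriv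
  have hKRval : KR ℓ = (R ℓ ^ 3)⁻¹ * (c + ∫ s in L..ℓ, f s) := by rw [hKRdef]
  rw [hKldef, hderiv, Hf]
  simp only
  rw [hKRval, hf]
  field_simp
  ring
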